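/- For every integer i ≥ 1, lim_{L→∞} liminf_{n→∞} Σ_{j=L+1}^n a(n,j)·p(j,i) = 0. -/
import Mathlib

open Real Filter Topology MeasureTheory

/-- The harmonic number `h n = ∑_{i=1}^n 1/i`, with `h 0 = 0`. -/
noncomputable def harmonic' (n : ℕ) : ℝ := ∑ i ∈ Finset.Icc 1 n, (1 : ℝ) / i

/-- One-step transition probabilities of the harmonic descent chain,
`p j i = 1/((j-i)·h_{j-1})` for `1 ≤ i < j`. -/
noncomputable def hdP (j i : ℕ) : ℝ := 1 / (((j : ℝ) - (i : ℝ)) * harmonic' (j - 1))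

/-- `b 1 = 1` and `b i = 6 h_{i-1} / (π² (i-1))` for `i ≥ 2`. -/
noncomputable def hdB (i : ℕ) : ℝ :=
  if i = 1 then 1 else 6 * harmonic' (i - 1) / (Real.pi ^ 2 * ((i : ℝ) - 1))

lemma harmonic'_pos {m : ℕ} (hm : 1 ≤ m) : 0 < harmonic' m := by
  unfold harmonic'
  apply Finset.sum_pos
  · intro k hk
    simp only [Finset.mem_Icc] at hk
    have : (0:ℝ) < (k:ℝ) := by exact_mod_cast (by omega : 0 < k)
    positivity
  · exact ⟨1, by simp [hm]⟩

lemma hdP_pos {j i : ℕ} (hi : 1 ≤ i) (hij : i < j) : 0 < hdP j i := by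
  unfold hdP
  have h1 : (0:ℝ) < (j:ℝ) - i := by
    have : (i:ℝ) < j := by exact_mod_cast hij
    linarith
  have h2 : 0 < harmonic' (j-1) := harmonic'_pos (by omega)
  positivity

lemma hdP_mono {j i i' : ℕ} (hi : 1 ≤ i) (hii' : i ≤ i') (hij : i' < j) :
    hdP j i ≤ hdP j i' := by
  unfold hdP
  have h2 : 0 < harmonic' (j-1) := harmonic'_pos (by omega)
  have h1 : (0:ℝ) < (j:ℝ) - i' := by
    have : (i':ℝ) < j := by exact_mod_cast hij
    linarith
  have h3 : (j:ℝ) - i' ≤ (j:ℝ) - i := by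
    have : (i:ℝ) ≤ i' := by exact_mod_cast hii'
    linarith
  apply one_div_le_one_div_of_le (by positivity)
  nlinarith

lemma hdP_row_sum {j : ℕ} (hj : 2 ≤ j) :
    ∑ i ∈ Finset.Icc 1 (j-1), hdP j i = 1 := by
  have h2 : 0 < harmonic' (j-1) := harmonic'_pos (by omega)
  have key : ∑ i ∈ Finset.Icc 1 (j-1), hdP j i
      = ∑ k ∈ Finset.Icc 1 (j-1), (1:ℝ) / k / harmonic' (j-1) := by
    apply Finset.sum_nbij' (fun i => j - i) (fun k => j - k)
    · intro a ha; simp only [Finset.mem_Icc] at *; omega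
    · intro a ha; simp only [Finset.mem_Icc] at *; omega
    · intro a ha; simp only [Finset.mem_Icc] at ha; omega
    · intro a ha; simp only [Finset.mem_Icc] at ha; omega
    · intro a ha
      simp only [Finset.mem_Icc] at ha
      unfold hdP
      have : ((j - a : ℕ) : ℝ) = (j:ℝ) - a := by
        have : a ≤ j := by omega
        push_cast [this]; ring
      rw [this]
      rw [one_div, mul_comm, ← one_div, div_div]
      ring_nf
  rw [key, ← Finset.sum_div]
  rw [show (∑ k ∈ Finset.Icc 1 (j-1), (1:ℝ)/k) = harmonic' (j-1) from rfl]
  exact div_self h2.ne'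

section Main

variable (a : ℕ → ℕ → ℝ)
    (ha_diag : ∀ n : ℕ, 1 ≤ n → a n n = 1)
    (ha_rec : ∀ n i : ℕ, 1 ≤ i → i < n →
      a n i = ∑ j ∈ Finset.Ioc i n, a n j * hdP j i)

include ha_diag ha_rec

lemma hd_a_nonneg : ∀ d n j : ℕ, 1 ≤ j → j ≤ n → n = j + d → 0 ≤ a n j := by
  intro d
  induction d using Nat.strong_induction_on with
  | _ d ih =>
    intro n j hj1 hj2 hd
    rcases eq_or_lt_of_le hj2 with h | h
    · rw [h, ha_diag n (by omega)]; norm_num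
    · rw [ha_rec n j hj1 h]
      apply Finset.sum_nonneg
      intro j' hj'
      simp only [Finset.mem_Ioc] at hj'
      exact mul_nonneg (ih (n - j') (by omega) n j' (by omega) hj'.2 (by omega))
        (hdP_pos hj1 hj'.1).le

lemma hd_cross_identity : ∀ d n L : ℕ, 1 ≤ L → n = L + d + 1 →
    ∑ j ∈ Finset.Ioc L n, a n j * (∑ i' ∈ Finset.Icc 1 L, hdP j i') = 1 := by
  intro d
  induction d with
  | zero =>
    intro n L hL hn
    have hIoc : Finset.Ioc L n = {n} := by
      ext x; simp only [Finset.mem_Ioc, Finset.mem_singleton]; omega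
    rw [hIoc, Finset.sum_singleton, ha_diag n (by omega), one_mul]
    have : Finset.Icc 1 L = Finset.Icc 1 (n - 1) := by rw [show n - 1 = L from by omega]
    rw [this, hdP_row_sum (by omega)]
  | succ d ih =>
    intro n L hL hn
    have hIoc : Finset.Ioc L n = insert (L+1) (Finset.Ioc (L+1) n) := by
      ext x; simp only [Finset.mem_Ioc, Finset.mem_insert]; omega
    rw [hIoc, Finset.sum_insert (by simp)]
    have hrow : ∑ i' ∈ Finset.Icc 1 L, hdP (L+1) i' = 1 := by
      have := hdP_row_sum (j := L+1) (by omega)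
      simpa using this
    rw [hrow, mul_one]
    have hIcc : Finset.Icc 1 (L+1) = insert (L+1) (Finset.Icc 1 L) := by
      ext x; simp only [Finset.mem_Icc, Finset.mem_insert]; omega
    have hsplit : ∀ j, (∑ i' ∈ Finset.Icc 1 (L+1), hdP j i')
        = hdP j (L+1) + ∑ i' ∈ Finset.Icc 1 L, hdP j i' := by
      intro j; rw [hIcc, Finset.sum_insert (by simp)]
    have hih := ih n (L+1) (by omega) (by omega)
    have : ∑ j ∈ Finset.Ioc (L+1) n, a n j * (∑ i' ∈ Finset.Icc 1 L, hdP j i')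
        = 1 - ∑ j ∈ Finset.Ioc (L+1) n, a n j * hdP j (L+1) := by
      have expand : ∑ j ∈ Finset.Ioc (L+1) n, a n j * (∑ i' ∈ Finset.Icc 1 (L+1), hdP j i')
          = ∑ j ∈ Finset.Ioc (L+1) n, (a n j * hdP j (L+1)
            + a n j * (∑ i' ∈ Finset.Icc 1 L, hdP j i')) := by
        apply Finset.sum_congr rfl
        intro j hj; rw [hsplit j]; ring
      rw [Finset.sum_add_distrib] at expand
      rw [expand] at hih
      linarith
    rw [this, ← ha_rec n (L+1) (by omega) (by omega)]
    ring

end Main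

theorem hd_tail_sum_liminf_tendsto_zero
    (a : ℕ → ℕ → ℝ)
    (ha_diag : ∀ n : ℕ, 1 ≤ n → a n n = 1)
    (ha_rec : ∀ n i : ℕ, 1 ≤ i → i < n →
      a n i = ∑ j ∈ Finset.Ioc i n, a n j * hdP j i)
    (i : ℕ) (hi : 1 ≤ i) :
    Filter.Tendsto
      (fun L : ℕ =>
        Filter.liminf (fun n : ℕ => ∑ j ∈ Finset.Ioc L n, a n j * hdP j i)
          Filter.atTop)
      Filter.atTop (𝓝 0) := by
  have ha_nn : ∀ n j : ℕ, 1 ≤ j → j ≤ n → 0 ≤ a n j := by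
    intro n j h1 h2
    exact hd_a_nonneg a ha_diag ha_rec (n - j) n j h1 h2 (by omega)
  -- pointwise bounds on the tail sums
  have tail_nonneg : ∀ L n : ℕ, i ≤ L →
      0 ≤ ∑ j ∈ Finset.Ioc L n, a n j * hdP j i := by
    intro L n hL
    apply Finset.sum_nonneg
    intro j hj
    simp only [Finset.mem_Ioc] at hj
    exact mul_nonneg (ha_nn n j (by omega) hj.2) (hdP_pos hi (by omega)).le
  have tail_le : ∀ L n : ℕ, i ≤ L →
      (∑ j ∈ Finset.Ioc L n, a n j * hdP j i) ≤ 1 / ((L:ℝ) - i + 1) := by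
    intro L n hL
    have hden : (0:ℝ) < (L:ℝ) - i + 1 := by
      have : (i:ℝ) ≤ L := by exact_mod_cast hL
      linarith
    by_cases hn : L < n
    · have hid := hd_cross_identity a ha_diag ha_rec (n - L - 1) n L (by omega) (by omega)
      rw [le_div_iff₀ hden]
      calc (∑ j ∈ Finset.Ioc L n, a n j * hdP j i) * ((L:ℝ) - i + 1)
          = ∑ j ∈ Finset.Ioc L n, a n j * hdP j i * ((L:ℝ) - i + 1) := Finset.sum_mul ..
        _ ≤ ∑ j ∈ Finset.Ioc L n, a n j * (∑ i' ∈ Finset.Icc 1 L, hdP j i') := ?_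
        _ = 1 := hid
      apply Finset.sum_le_sum
      intro j hj
      simp only [Finset.mem_Ioc] at hj
      have hjL : L < j := hj.1
      have hanj : 0 ≤ a n j := ha_nn n j (by omega) hj.2
      have key : ((L:ℝ) - i + 1) * hdP j i ≤ ∑ i' ∈ Finset.Icc 1 L, hdP j i' := by
        have hsub : Finset.Icc i L ⊆ Finset.Icc 1 L := by
          apply Finset.Icc_subset_Icc_left hi
        have h1 : ∑ i' ∈ Finset.Icc i L, hdP j i' ≤ ∑ i' ∈ Finset.Icc 1 L, hdP j i' := by
          apply Finset.sum_le_sum_of_subset_of_nonneg hsub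
          intro i' hi' _
          simp only [Finset.mem_Icc] at hi'
          exact (hdP_pos hi'.1 (by omega)).le
        have h2 : ((L:ℝ) - i + 1) * hdP j i ≤ ∑ i' ∈ Finset.Icc i L, hdP j i' := by
          have hcard : (Finset.Icc i L).card = L - i + 1 := by
            rw [Nat.card_Icc]; omega
          have : ∑ i' ∈ Finset.Icc i L, hdP j i ≤ ∑ i' ∈ Finset.Icc i L, hdP j i' := by
            apply Finset.sum_le_sum
            intro i' hi'
            simp only [Finset.mem_Icc] at hi'
            exact hdP_mono hi hi'.1 (by omega)
          rw [Finset.sum_const, hcard] at this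
          have hcast : ((L - i + 1 : ℕ) : ℝ) = (L:ℝ) - i + 1 := by
            push_cast [hL]; ring
          rw [nsmul_eq_mul, hcast] at this
          exact this
        linarith
      calc a n j * hdP j i * ((L:ℝ) - i + 1)
          = a n j * (((L:ℝ) - i + 1) * hdP j i) := by ring
        _ ≤ a n j * (∑ i' ∈ Finset.Icc 1 L, hdP j i') :=
            mul_le_mul_of_nonneg_left key hanj
    · have : Finset.Ioc L n = ∅ := by
        rw [Finset.Ioc_eq_empty]; omega
      rw [this, Finset.sum_empty]
      positivity
  -- bounds on the liminf
  have hlim_lb : ∀ L : ℕ, i ≤ L →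
      0 ≤ Filter.liminf (fun n : ℕ => ∑ j ∈ Finset.Ioc L n, a n j * hdP j i)
        Filter.atTop := by
    intro L hL
    have h0 : Filter.liminf (fun _ : ℕ => (0:ℝ)) Filter.atTop = 0 := Filter.liminf_const 0
    rw [← h0]
    apply Filter.liminf_le_liminf
    · exact Filter.Eventually.of_forall (fun n => tail_nonneg L n hL)
    · exact Filter.isBoundedUnder_const
    · exact (Filter.isBoundedUnder_of
        ⟨1 / ((L:ℝ) - i + 1), fun n => tail_le L n hL⟩).isCoboundedUnder_ge
  have hlim_ub : ∀ L : ℕ, i ≤ L →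
      Filter.liminf (fun n : ℕ => ∑ j ∈ Finset.Ioc L n, a n j * hdP j i)
        Filter.atTop ≤ 1 / ((L:ℝ) - i + 1) := by
    intro L hL
    have h0 : Filter.liminf (fun _ : ℕ => (1 / ((L:ℝ) - i + 1))) Filter.atTop
        = 1 / ((L:ℝ) - i + 1) := Filter.liminf_const _
    rw [← h0]
    apply Filter.liminf_le_liminf
    · exact Filter.Eventually.of_forall (fun n => tail_le L n hL)
    · exact Filter.isBoundedUnder_of ⟨0, fun n => tail_nonneg L n hL⟩
    · exact Filter.isBoundedUnder_const.isCoboundedUnder_ge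
  -- squeeze
  have hub_tendsto : Filter.Tendsto (fun L : ℕ => 1 / ((L:ℝ) - i + 1))
      Filter.atTop (𝓝 0) := by
    simp only [one_div]
    apply Filter.Tendsto.inv_tendsto_atTop
    apply Filter.tendsto_atTop_add_const_right
    apply Filter.tendsto_atTop_add_const_right
    exact tendsto_natCast_atTop_atTop
  apply tendsto_of_tendsto_of_tendsto_of_le_of_le' tendsto_const_nhds hub_tendsto
  · filter_upwards [Filter.eventually_ge_atTop i] with L hL using hlim_lb L hL
  · filter_upwards [Filter.eventually_ge_atTop i] with L hL using hlim_ub L hL
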